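/- For all t, s ∈ [0,1], the double series Φ_{0,0}(t)·Φ_{0,0}(s) + Σ_{n=1}^∞ Σ_{k=0}^{2^(n−1)−1} Φ_{n,k}(t)·Φ_{n,k}(s) converges and equals (Γ/(2α))·e^(−α(t+s))·(e^(2α·min(t,s)) − 1), which is the covariance of the Ornstein–Uhlenbeck process started at 0. -/

import Mathlib

/-- The Haar-like basis element `Φ_{n,k}` for the Ornstein–Uhlenbeck process with
diffusion coefficient `Γ` and drift coefficient `α`.  For `n = 0` (and `k = 0`) this is
`Φ_{0,0}(t) = √(Γ/α)·e^(−α/2)·sinh(α t)/√(sinh α)`; for `n ≥ 1` it is the wedge-shaped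
function supported on `[2k·2^(−n), 2(k+1)·2^(−n)]`. -/
noncomputable def Phi (Γ α : ℝ) (n k : ℕ) (t : ℝ) : ℝ :=
  if n = 0 then
    Real.sqrt (Γ / α) * Real.exp (-α / 2) * Real.sinh (α * t) / Real.sqrt (Real.sinh α)
  else if 2 * (k : ℝ) * 2 ^ (-(n : ℤ)) ≤ t ∧ t ≤ (2 * (k : ℝ) + 1) * 2 ^ (-(n : ℤ)) then
    Real.sqrt (Γ / α) * Real.sinh (α * (t - 2 * (k : ℝ) * 2 ^ (-(n : ℤ)))) /
      Real.sqrt (Real.sinh (α * 2 ^ (-(n : ℤ) + 1)))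
  else if (2 * (k : ℝ) + 1) * 2 ^ (-(n : ℤ)) ≤ t ∧ t ≤ 2 * ((k : ℝ) + 1) * 2 ^ (-(n : ℤ)) then
    Real.sqrt (Γ / α) * Real.sinh (α * (2 * ((k : ℝ) + 1) * 2 ^ (-(n : ℤ)) - t)) /
      Real.sqrt (Real.sinh (α * 2 ^ (-(n : ℤ) + 1)))
  else 0

open Filter

/-- Bridge kernel on `[a,b]` for the OU process (covariance of the OU bridge). -/
noncomputable def Br (α a b t s : ℝ) : ℝ :=
  if a ≤ min t s ∧ max t s ≤ b then
    Real.sinh (α * (min t s - a)) * Real.sinh (α * (b - max t s)) / Real.sinh (α * (b - a))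
  else 0

/-- Wedge function on `[a,b]` with midpoint `(a+b)/2`. -/
noncomputable def Wed (Γ α a b t : ℝ) : ℝ :=
  if a ≤ t ∧ t ≤ (a + b) / 2 then
    Real.sqrt (Γ / α) * Real.sinh (α * (t - a)) / Real.sqrt (Real.sinh (α * (b - a)))
  else if (a + b) / 2 ≤ t ∧ t ≤ b then
    Real.sqrt (Γ / α) * Real.sinh (α * (b - t)) / Real.sqrt (Real.sinh (α * (b - a)))
  else 0

/-- Sum of bridge kernels over the dyadic cells at level `m`. -/
noncomputable def RR (α : ℝ) (m : ℕ) (t s : ℝ) : ℝ :=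
  ∑ j ∈ Finset.range (2 ^ m),
    Br α ((j : ℝ) * 2 ^ (-(m : ℤ))) (((j : ℝ) + 1) * 2 ^ (-(m : ℤ))) t s

lemma sinhKey (H y : ℝ) : Real.sinh (2*H - y) * Real.sinh H
    = Real.sinh (H - y) * Real.sinh (2*H) + Real.sinh y * Real.sinh H := by
  simp only [Real.sinh_eq, two_mul, sub_eq_add_neg, Real.exp_add, Real.exp_neg]
  field_simp
  ring

lemma expKey (x y : ℝ) : Real.exp (-x) * Real.sinh y + Real.sinh (x - y)
    = Real.sinh x * Real.exp (-y) := by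
  simp only [Real.sinh_eq, sub_eq_add_neg, Real.exp_add, Real.exp_neg]
  field_simp
  ring

lemma mainKey (H y : ℝ) (hH : 0 < Real.sinh H) (h2 : 0 < Real.sinh (2 * H)) :
    Real.sinh y / Real.sinh (2 * H) + Real.sinh (H - y) / Real.sinh H
      = Real.sinh (2 * H - y) / Real.sinh (2 * H) := by
  rw [div_add_div _ _ h2.ne' hH.ne', div_eq_div_iff (mul_pos h2 hH).ne' h2.ne']
  linear_combination (-Real.sinh (2 * H)) * sinhKey H y

lemma Br_comm (α a b t s : ℝ) : Br α a b t s = Br α a b s t := by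
  simp [Br, min_comm, max_comm]

lemma phi_eq_wed (Γ α : ℝ) (n k : ℕ) (hn : n ≠ 0) (t : ℝ) :
    Phi Γ α n k t = Wed Γ α (2 * (k : ℝ) * 2 ^ (-(n : ℤ))) (2 * ((k : ℝ) + 1) * 2 ^ (-(n : ℤ))) t := by
  have e2 : 2 * ((k : ℝ) + 1) * 2 ^ (-(n : ℤ)) - 2 * (k : ℝ) * 2 ^ (-(n : ℤ))
      = 2 ^ (-(n : ℤ) + 1) := by
    rw [zpow_add_one₀ (two_ne_zero)]; ring
  have e1 : (2 * (k : ℝ) * 2 ^ (-(n : ℤ)) + 2 * ((k : ℝ) + 1) * 2 ^ (-(n : ℤ))) / 2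
      = (2 * (k : ℝ) + 1) * 2 ^ (-(n : ℤ)) := by ring
  simp only [Phi, Wed, if_neg hn, e1, e2]

lemma sum_pair (m : ℕ) (f : ℕ → ℝ) :
    ∑ i ∈ Finset.range (2 * m), f i = ∑ i ∈ Finset.range m, (f (2 * i) + f (2 * i + 1)) := by
  induction m with
  | zero => simp
  | succ k ih =>
    rw [show 2 * (k + 1) = 2 * k + 1 + 1 by omega, Finset.sum_range_succ,
      Finset.sum_range_succ, ih, Finset.sum_range_succ]
    ring

lemma cellAux (Γ α : ℝ) (hΓ : 0 < Γ) (hα : 0 < α) {a b : ℝ} (hab : a < b)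
    {t s : ℝ} (hts : t ≤ s) :
    Wed Γ α a b t * Wed Γ α a b s + Γ / α * Br α a ((a + b) / 2) t s
      + Γ / α * Br α ((a + b) / 2) b t s = Γ / α * Br α a b t s := by
  have hΓα : (0:ℝ) ≤ Γ / α := by positivity
  have hac : a < (a + b) / 2 := by linarith
  have hcb : (a + b) / 2 < b := by linarith
  have hH : 0 < α * ((a + b) / 2 - a) := by nlinarith
  have hSH : 0 < Real.sinh (α * ((a + b) / 2 - a)) := Real.sinh_pos_iff.2 hH
  have hS2 : 0 < Real.sinh (α * (b - a)) := Real.sinh_pos_iff.2 (by nlinarith)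
  have hS2' : 0 < Real.sinh (2 * (α * ((a + b) / 2 - a))) := by
    rw [show 2 * (α * ((a + b) / 2 - a)) = α * (b - a) by ring]; exact hS2
  have main : ∀ y : ℝ,
      Real.sinh y / Real.sinh (2 * (α * ((a + b) / 2 - a)))
        + Real.sinh (α * ((a + b) / 2 - a) - y) / Real.sinh (α * ((a + b) / 2 - a))
      = Real.sinh (2 * (α * ((a + b) / 2 - a)) - y)
          / Real.sinh (2 * (α * ((a + b) / 2 - a))) :=
    fun y => mainKey (α * ((a + b) / 2 - a)) y hSH hS2'
  simp only [Br, Wed, min_eq_left hts, max_eq_right hts]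
  by_cases h1 : a ≤ t
  · by_cases h2 : s ≤ b
    · have hast : a ≤ s := le_trans h1 hts
      have htb : t ≤ b := le_trans hts h2
      by_cases h3 : s ≤ (a + b) / 2
      · have ht3 : t ≤ (a + b) / 2 := le_trans hts h3
        by_cases h4 : (a + b) / 2 ≤ t
        · -- t = s = midpoint
          have htc : t = (a + b) / 2 := le_antisymm ht3 h4
          have hsc : s = (a + b) / 2 := le_antisymm h3 (le_trans h4 hts)
          have hsc2 : (a + b) / 2 ≤ s := le_of_eq hsc.symm
          simp only [h1, ht3, hast, h3, h4, h2, hsc2, and_self, and_true, true_and,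
            if_true, if_pos]
          have z1 : α * ((a + b) / 2 - s) = 0 := by rw [hsc]; ring
          have z2 : α * (t - (a + b) / 2) = 0 := by rw [htc]; ring
          have z3 : α * (s - a) = α * (b - s) := by rw [hsc]; ring
          rw [z1, z2, z3, Real.sinh_zero]
          rw [div_mul_div_comm, mul_mul_mul_comm, Real.mul_self_sqrt hΓα,
            Real.mul_self_sqrt hS2.le]
          ring
        · -- 3a: a ≤ t ≤ s ≤ c, t < c
          have h4' : ¬ ((a + b) / 2 ≤ t) := h4
          simp only [h1, ht3, hast, h3, h2, h4', and_self, and_true, true_and,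
            false_and, if_true, if_false, if_pos]
          rw [div_mul_div_comm, mul_mul_mul_comm, Real.mul_self_sqrt hΓα,
            Real.mul_self_sqrt hS2.le]
          have e0 : α * (b - a) = 2 * (α * ((a + b) / 2 - a)) := by ring
          have e1 : α * ((a + b) / 2 - s) = α * ((a + b) / 2 - a) - α * (s - a) := by ring
          have e2 : α * (b - s) = 2 * (α * ((a + b) / 2 - a)) - α * (s - a) := by ring
          rw [e0, e1, e2]
          have m := main (α * (s - a))
          linear_combination (Γ / α * Real.sinh (α * (t - a))) * m
      · have h3' : (a + b) / 2 ≤ s := le_of_not_ge h3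
        by_cases h4 : (a + b) / 2 ≤ t
        · by_cases h5 : t ≤ (a + b) / 2
          · -- boundary t = c
            have htc : t = (a + b) / 2 := le_antisymm h5 h4
            simp only [h1, h5, h3, h3', h2, h4, and_self, and_true, true_and,
              and_false, false_and, if_true, if_false, if_pos]
            have z2 : α * (t - (a + b) / 2) = 0 := by rw [htc]; ring
            have z3 : α * (t - a) = α * (b - t)  := by rw [htc]; ring
            rw [z2, Real.sinh_zero, z3]
            rw [div_mul_div_comm, mul_mul_mul_comm, Real.mul_self_sqrt hΓα,
              Real.mul_self_sqrt hS2.le]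
            rw [← z3]
            ring
          · -- 3c: c < t ≤ s ≤ b
            simp only [h1, h5, h3, h3', h2, h4, htb, and_self, and_true, true_and,
              and_false, false_and, if_true, if_false, if_pos]
            rw [div_mul_div_comm, mul_mul_mul_comm, Real.mul_self_sqrt hΓα,
              Real.mul_self_sqrt hS2.le]
            have e0 : α * (b - a) = 2 * (α * ((a + b) / 2 - a)) := by ring
            have e0' : α * (b - (a + b) / 2) = α * ((a + b) / 2 - a) := by ring
            have e1 : α * (t - (a + b) / 2) = α * ((a + b) / 2 - a) - α * (b - t) := by ring
            have e2 : α * (t - a) = 2 * (α * ((a + b) / 2 - a)) - α * (b - t) := by ring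
            rw [e0, e0', e1, e2]
            have m := main (α * (b - t))
            linear_combination (Γ / α * Real.sinh (α * (b - s))) * m
        · -- 3b: t < c < s
          simp only [h1, h3, h3', h2, h4, htb, and_self, and_true, true_and,
            and_false, false_and, if_true, if_false, if_pos, le_of_not_ge h4]
          rw [div_mul_div_comm, mul_mul_mul_comm, Real.mul_self_sqrt hΓα,
            Real.mul_self_sqrt hS2.le]
          ring
    · -- s > b
      have h2' : ¬ s ≤ (a + b) / 2 := fun h => h2 (le_trans h hcb.le)
      simp only [h2, h2', and_false, false_and, and_true, if_false]
      split_ifs <;> ring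
  · -- t < a
    have h1' : ¬ ((a + b) / 2 ≤ t) := fun h => h1 (le_trans hac.le h)
    simp only [h1, h1', false_and, and_false, if_false]
    split_ifs <;> ring

lemma cell (Γ α : ℝ) (hΓ : 0 < Γ) (hα : 0 < α) {a b : ℝ} (hab : a < b) (t s : ℝ) :
    Wed Γ α a b t * Wed Γ α a b s + Γ / α * Br α a ((a + b) / 2) t s
      + Γ / α * Br α ((a + b) / 2) b t s = Γ / α * Br α a b t s := by
  rcases le_total t s with h | h
  · exact cellAux Γ α hΓ hα hab h
  · rw [mul_comm, Br_comm α a ((a + b) / 2), Br_comm α ((a + b) / 2) b, Br_comm α a b]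
    exact cellAux Γ α hΓ hα hab h

lemma level (Γ α : ℝ) (hΓ : 0 < Γ) (hα : 0 < α) (m : ℕ) (t s : ℝ) :
    ∑ k ∈ Finset.range (2 ^ m), Phi Γ α (m + 1) k t * Phi Γ α (m + 1) k s
      = Γ / α * RR α m t s - Γ / α * RR α (m + 1) t s := by
  rw [RR, RR, show (2:ℕ) ^ (m + 1) = 2 * 2 ^ m by ring, sum_pair, Finset.mul_sum,
    Finset.mul_sum, ← Finset.sum_sub_distrib]
  refine Finset.sum_congr rfl fun k hk => ?_
  have hpow : ((2:ℝ)) ^ (-(m:ℤ)) = 2 * 2 ^ (-((m + 1 : ℕ)):ℤ) := by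
    have h : (-(m:ℤ)) = (-((m + 1 : ℕ):ℤ)) + 1 := by push_cast; ring
    rw [h, zpow_add_one₀ two_ne_zero]; ring
  have hp : (0:ℝ) < 2 ^ (-((m + 1 : ℕ)):ℤ) := by positivity
  have hab : (2:ℝ) * (k:ℝ) * 2 ^ (-((m + 1 : ℕ)):ℤ) < 2 * ((k:ℝ) + 1) * 2 ^ (-((m + 1 : ℕ)):ℤ) := by
    nlinarith
  have hc := cell Γ α hΓ hα hab t s
  rw [phi_eq_wed Γ α (m + 1) k (Nat.succ_ne_zero m) t,
    phi_eq_wed Γ α (m + 1) k (Nat.succ_ne_zero m) s]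
  have eA : (k:ℝ) * 2 ^ (-(m:ℤ)) = 2 * (k:ℝ) * 2 ^ (-((m + 1 : ℕ)):ℤ) := by rw [hpow]; ring
  have eB : ((k:ℝ) + 1) * 2 ^ (-(m:ℤ)) = 2 * ((k:ℝ) + 1) * 2 ^ (-((m + 1 : ℕ)):ℤ) := by
    rw [hpow]; ring
  have e1 : ((2 * k : ℕ):ℝ) * 2 ^ (-((m + 1 : ℕ)):ℤ) = 2 * (k:ℝ) * 2 ^ (-((m + 1 : ℕ)):ℤ) := by
    push_cast; ring
  have e2 : (((2 * k : ℕ):ℝ) + 1) * 2 ^ (-((m + 1 : ℕ)):ℤ)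
      = (2 * (k:ℝ) * 2 ^ (-((m + 1 : ℕ)):ℤ) + 2 * ((k:ℝ) + 1) * 2 ^ (-((m + 1 : ℕ)):ℤ)) / 2 := by
    push_cast; ring
  have e3 : ((2 * k + 1 : ℕ):ℝ) * 2 ^ (-((m + 1 : ℕ)):ℤ)
      = (2 * (k:ℝ) * 2 ^ (-((m + 1 : ℕ)):ℤ) + 2 * ((k:ℝ) + 1) * 2 ^ (-((m + 1 : ℕ)):ℤ)) / 2 := by
    push_cast; ring
  have e4 : (((2 * k + 1 : ℕ):ℝ) + 1) * 2 ^ (-((m + 1 : ℕ)):ℤ)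
      = 2 * ((k:ℝ) + 1) * 2 ^ (-((m + 1 : ℕ)):ℤ) := by push_cast; ring
  rw [eA, eB, e1, e2, e3, e4]
  linarith [hc]

lemma sqProd (c S E X Y : ℝ) (hc : 0 ≤ c) (hS : 0 ≤ S) :
    Real.sqrt c * E * X / Real.sqrt S * (Real.sqrt c * E * Y / Real.sqrt S)
      = c * (E * E * X * Y) / S := by
  rw [div_mul_div_comm, Real.mul_self_sqrt hS, mul_mul_mul_comm,
    mul_mul_mul_comm (Real.sqrt c) E, Real.mul_self_sqrt hc]
  ring

lemma baseAux (Γ α : ℝ) (hΓ : 0 < Γ) (hα : 0 < α) (t s : ℝ)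
    (ht0 : 0 ≤ t) (hs1 : s ≤ 1) (hts : t ≤ s) :
    Phi Γ α 0 0 t * Phi Γ α 0 0 s + Γ / α * Br α 0 1 t s
      = Γ / (2 * α) * Real.exp (-α * (t + s)) * (Real.exp (2 * α * min t s) - 1) := by
  have hΓα : (0:ℝ) ≤ Γ / α := by positivity
  have hsinh : 0 < Real.sinh α := Real.sinh_pos_iff.2 hα
  simp only [Phi, Br, min_eq_left hts, max_eq_right hts, reduceIte]
  rw [if_pos (show (0:ℝ) ≤ t ∧ s ≤ 1 from ⟨ht0, hs1⟩), sqProd _ _ _ _ _ hΓα hsinh.le]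
  have key3 : Real.exp (-α / 2) * Real.exp (-α / 2) = Real.exp (-α) := by
    rw [← Real.exp_add]; norm_num
  rw [key3, show α * (t - 0) = α * t by ring, show α * (1 - s) = α - α * s by ring,
    show α * (1 - 0) = α by ring]
  have key := expKey α (α * s)
  have step : Γ / α * (Real.exp (-α) * Real.sinh (α * t) * Real.sinh (α * s)) / Real.sinh α
      + Γ / α * (Real.sinh (α * t) * Real.sinh (α - α * s) / Real.sinh α)
      = Γ / α * Real.sinh (α * t) * Real.exp (-(α * s)) := by
    have hE : Real.exp (-(α * s))
        = (Real.exp (-α) * Real.sinh (α * s) + Real.sinh (α - α * s)) / Real.sinh α :=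
      (eq_div_iff hsinh.ne').2 (by rw [key]; ring)
    rw [hE]
    ring
  rw [step]
  simp only [Real.sinh_eq]
  rw [show -α * (t + s) = -(α * t) + -(α * s) by ring, show 2 * α * t = α * t + α * t by ring,
    Real.exp_add, Real.exp_add, Real.exp_neg, Real.exp_neg]
  field_simp

lemma base (Γ α : ℝ) (hΓ : 0 < Γ) (hα : 0 < α) (t s : ℝ)
    (ht0 : 0 ≤ t) (ht1 : t ≤ 1) (hs0 : 0 ≤ s) (hs1 : s ≤ 1) :
    Phi Γ α 0 0 t * Phi Γ α 0 0 s + Γ / α * Br α 0 1 t s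
      = Γ / (2 * α) * Real.exp (-α * (t + s)) * (Real.exp (2 * α * min t s) - 1) := by
  rcases le_total t s with h | h
  · exact baseAux Γ α hΓ hα t s ht0 hs1 h
  · rw [mul_comm, Br_comm, min_comm, add_comm t s]
    exact baseAux Γ α hΓ hα s t hs0 ht1 h

lemma phi_nonneg (Γ α : ℝ) (hΓ : 0 < Γ) (hα : 0 < α) (n k : ℕ) (t : ℝ) (ht : 0 ≤ t) :
    0 ≤ Phi Γ α n k t := by
  unfold Phi
  split_ifs with h1 h2 h3
  · exact div_nonneg (mul_nonneg (mul_nonneg (Real.sqrt_nonneg _) (Real.exp_pos _).le)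
      (Real.sinh_nonneg_iff.2 (by positivity))) (Real.sqrt_nonneg _)
  · exact div_nonneg (mul_nonneg (Real.sqrt_nonneg _)
      (Real.sinh_nonneg_iff.2 (mul_nonneg hα.le (by linarith [h2.1])))) (Real.sqrt_nonneg _)
  · exact div_nonneg (mul_nonneg (Real.sqrt_nonneg _)
      (Real.sinh_nonneg_iff.2 (mul_nonneg hα.le (by linarith [h3.2])))) (Real.sqrt_nonneg _)
  · exact le_refl 0

lemma Br_nonneg (α : ℝ) (hα : 0 < α) {a b : ℝ} (hab : a ≤ b) (t s : ℝ) :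
    0 ≤ Br α a b t s := by
  unfold Br
  split_ifs with h
  · exact div_nonneg (mul_nonneg
      (Real.sinh_nonneg_iff.2 (mul_nonneg hα.le (by linarith [h.1])))
      (Real.sinh_nonneg_iff.2 (mul_nonneg hα.le (by linarith [h.2]))))
      (Real.sinh_nonneg_iff.2 (mul_nonneg hα.le (by linarith)))
  · exact le_refl 0

lemma RR_nonneg (α : ℝ) (hα : 0 < α) (m : ℕ) (t s : ℝ) : 0 ≤ RR α m t s := by
  refine Finset.sum_nonneg fun j _ => Br_nonneg α hα ?_ t s
  have hp : (0:ℝ) < 2 ^ (-(m:ℤ)) := by positivity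
  nlinarith

lemma RR_le (α : ℝ) (hα : 0 < α) (m : ℕ) (t s : ℝ) :
    RR α m t s ≤ 2 * Real.sinh (α * 2 ^ (-(m:ℤ))) := by
  have hp : (0:ℝ) < 2 ^ (-(m:ℤ)) := by positivity
  have hA : 0 < Real.sinh (α * 2 ^ (-(m:ℤ))) := Real.sinh_pos_iff.2 (by positivity)
  set j := ⌊min t s / 2 ^ (-(m:ℤ))⌋₊ with hj
  have hbound : ∀ k ∈ Finset.range (2 ^ m),
      Br α ((k : ℝ) * 2 ^ (-(m : ℤ))) (((k : ℝ) + 1) * 2 ^ (-(m : ℤ))) t s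
        ≤ (if k = j then Real.sinh (α * 2 ^ (-(m:ℤ))) else 0)
          + (if k = j - 1 then Real.sinh (α * 2 ^ (-(m:ℤ))) else 0) := by
    intro k _
    by_cases hc : (k : ℝ) * 2 ^ (-(m : ℤ)) ≤ min t s ∧ max t s ≤ ((k : ℝ) + 1) * 2 ^ (-(m : ℤ))
    · have hmm : min t s ≤ max t s := min_le_max
      have hBr : Br α ((k : ℝ) * 2 ^ (-(m : ℤ))) (((k : ℝ) + 1) * 2 ^ (-(m : ℤ))) t s
          ≤ Real.sinh (α * 2 ^ (-(m:ℤ))) := by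
        rw [Br, if_pos hc,
          show α * (((k:ℝ) + 1) * 2 ^ (-(m:ℤ)) - (k:ℝ) * 2 ^ (-(m:ℤ))) = α * 2 ^ (-(m:ℤ)) by ring]
        rw [div_le_iff₀ hA]
        have b1 : Real.sinh (α * (min t s - (k:ℝ) * 2 ^ (-(m:ℤ)))) ≤ Real.sinh (α * 2 ^ (-(m:ℤ))) :=
          Real.sinh_le_sinh.2 (mul_le_mul_of_nonneg_left (by linarith [hc.1, hc.2]) hα.le)
        have b2 : Real.sinh (α * (((k:ℝ) + 1) * 2 ^ (-(m:ℤ)) - max t s)) ≤ Real.sinh (α * 2 ^ (-(m:ℤ))) :=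
          Real.sinh_le_sinh.2 (mul_le_mul_of_nonneg_left (by linarith [hc.1, hc.2]) hα.le)
        have n1 : 0 ≤ Real.sinh (α * (min t s - (k:ℝ) * 2 ^ (-(m:ℤ)))) :=
          Real.sinh_nonneg_iff.2 (mul_nonneg hα.le (by linarith [hc.1]))
        have n2 : 0 ≤ Real.sinh (α * (((k:ℝ) + 1) * 2 ^ (-(m:ℤ)) - max t s)) :=
          Real.sinh_nonneg_iff.2 (mul_nonneg hα.le (by linarith [hc.2]))
        nlinarith
      have hkj : k = j ∨ k = j - 1 := by
        have h1 : (k:ℝ) ≤ min t s / 2 ^ (-(m:ℤ)) := (le_div_iff₀ hp).2 hc.1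
        have h2 : min t s / 2 ^ (-(m:ℤ)) ≤ ((k + 1 : ℕ):ℝ) := by
          rw [div_le_iff₀ hp]; push_cast; linarith [hc.2, min_le_max (a := t) (b := s)]
        have hj1 : k ≤ j := Nat.le_floor h1
        have hj2 : j ≤ k + 1 := by
          have h3 := Nat.floor_mono h2
          rwa [Nat.floor_natCast] at h3
        omega
      have hite1 : (0:ℝ) ≤ if k = j then Real.sinh (α * 2 ^ (-(m:ℤ))) else 0 := by
        split_ifs
        · exact hA.le
        · exact le_rfl
      have hite2 : (0:ℝ) ≤ if k = j - 1 then Real.sinh (α * 2 ^ (-(m:ℤ))) else 0 := by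
        split_ifs
        · exact hA.le
        · exact le_rfl
      rcases hkj with hk | hk
      · rw [if_pos hk]; linarith
      · rw [if_pos hk]; linarith
    · rw [Br, if_neg hc]
      have h1 : (0:ℝ) ≤ if k = j then Real.sinh (α * 2 ^ (-(m:ℤ))) else 0 := by
        split_ifs
        · exact hA.le
        · exact le_rfl
      have h2 : (0:ℝ) ≤ if k = j - 1 then Real.sinh (α * 2 ^ (-(m:ℤ))) else 0 := by
        split_ifs
        · exact hA.le
        · exact le_rfl
      linarith
  calc RR α m t s ≤ ∑ k ∈ Finset.range (2 ^ m),
        ((if k = j then Real.sinh (α * 2 ^ (-(m:ℤ))) else 0)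
          + (if k = j - 1 then Real.sinh (α * 2 ^ (-(m:ℤ))) else 0)) :=
      Finset.sum_le_sum hbound
    _ ≤ Real.sinh (α * 2 ^ (-(m:ℤ))) + Real.sinh (α * 2 ^ (-(m:ℤ))) := by
      rw [Finset.sum_add_distrib]
      gcongr
      · rw [Finset.sum_ite_eq' (Finset.range (2 ^ m))]
        split_ifs
        · exact le_rfl
        · exact hA.le
      · rw [Finset.sum_ite_eq' (Finset.range (2 ^ m))]
        split_ifs
        · exact le_rfl
        · exact hA.le
    _ = 2 * Real.sinh (α * 2 ^ (-(m:ℤ))) := by ring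

lemma RR_tendsto (α : ℝ) (hα : 0 < α) (t s : ℝ) :
    Tendsto (fun m : ℕ => RR α m t s) atTop (nhds 0) := by
  have h0 : Tendsto (fun m : ℕ => (2:ℝ) ^ (-(m:ℤ))) atTop (nhds 0) := by
    have he : ∀ m : ℕ, (2:ℝ) ^ (-(m:ℤ)) = (1/2:ℝ) ^ m := fun m => by
      rw [zpow_neg, zpow_natCast, one_div, inv_pow]
    simp only [he]
    exact tendsto_pow_atTop_nhds_zero_of_lt_one (by norm_num) (by norm_num)
  have h1 : Tendsto (fun m : ℕ => α * (2:ℝ) ^ (-(m:ℤ))) atTop (nhds 0) := by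
    simpa using h0.const_mul α
  have h2 : Tendsto (fun m : ℕ => Real.sinh (α * (2:ℝ) ^ (-(m:ℤ)))) atTop (nhds 0) := by
    have := (Real.continuous_sinh.tendsto 0).comp h1
    simpa [Function.comp_def] using this
  have h3 : Tendsto (fun m : ℕ => 2 * Real.sinh (α * (2:ℝ) ^ (-(m:ℤ)))) atTop (nhds 0) := by
    simpa using h2.const_mul 2
  exact tendsto_of_tendsto_of_tendsto_of_le_of_le tendsto_const_nhds h3
    (fun m => RR_nonneg α hα m t s) (fun m => RR_le α hα m t s)

/-- For all `t, s ∈ [0,1]`, the double series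
`Φ_{0,0}(t)·Φ_{0,0}(s) + Σ_{n=1}^∞ Σ_{k=0}^{2^(n−1)−1} Φ_{n,k}(t)·Φ_{n,k}(s)`
(grouped by levels `n`; note `Finset.range (2 ^ (0 - 1)) = {0}` so the `n = 0` term is
`Φ_{0,0}(t)·Φ_{0,0}(s)`) converges and equals
`(Γ/(2α))·e^(−α(t+s))·(e^(2α·min(t,s)) − 1)`, the covariance of the
Ornstein–Uhlenbeck process started at `0`. -/
theorem ou_covariance (Γ α : ℝ) (hΓ : 0 < Γ) (hα : 0 < α)
    (t s : ℝ) (ht : t ∈ Set.Icc (0 : ℝ) 1) (hs : s ∈ Set.Icc (0 : ℝ) 1) :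
    HasSum (fun n : ℕ => ∑ k ∈ Finset.range (2 ^ (n - 1)), Phi Γ α n k t * Phi Γ α n k s)
      (Γ / (2 * α) * Real.exp (-α * (t + s)) * (Real.exp (2 * α * min t s) - 1)) := by
  obtain ⟨ht0, ht1⟩ := ht
  obtain ⟨hs0, hs1⟩ := hs
  set a : ℕ → ℝ := fun n => ∑ k ∈ Finset.range (2 ^ (n - 1)), Phi Γ α n k t * Phi Γ α n k s
    with ha
  set K : ℝ := Γ / (2 * α) * Real.exp (-α * (t + s)) * (Real.exp (2 * α * min t s) - 1)
    with hK
  have hanonneg : ∀ n, 0 ≤ a n := fun n => Finset.sum_nonneg fun k _ =>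
    mul_nonneg (phi_nonneg Γ α hΓ hα n k t ht0) (phi_nonneg Γ α hΓ hα n k s hs0)
  have hRR0 : RR α 0 t s = Br α 0 1 t s := by
    norm_num [RR, Finset.sum_range_one]
  have hbase : a 0 = K - Γ / α * RR α 0 t s := by
    have h1 : a 0 = Phi Γ α 0 0 t * Phi Γ α 0 0 s := by
      simp [ha, Finset.sum_range_one]
    rw [h1, hRR0, hK]
    linarith [base Γ α hΓ hα t s ht0 ht1 hs0 hs1]
  have hstep : ∀ N, ∑ n ∈ Finset.range (N + 1), a n = K - Γ / α * RR α N t s := by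
    intro N
    induction N with
    | zero => simpa using hbase
    | succ M ih =>
      rw [Finset.sum_range_succ, ih]
      have hl : a (M + 1) = Γ / α * RR α M t s - Γ / α * RR α (M + 1) t s := by
        have := level Γ α hΓ hα M t s
        simpa [ha] using this
      rw [hl]
      ring
  have hT : Tendsto (fun N => ∑ n ∈ Finset.range (N + 1), a n) atTop (nhds K) := by
    simp only [hstep]
    have := (RR_tendsto α hα t s).const_mul (Γ / α)
    simpa using tendsto_const_nhds.sub this
  have hT' : Tendsto (fun N => ∑ n ∈ Finset.range N, a n) atTop (nhds K) :=
    (tendsto_add_atTop_iff_nat 1).1 hT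
  have hKnn : 0 ≤ K := by
    rw [hK]
    have h1 : (1:ℝ) ≤ Real.exp (2 * α * min t s) := by
      rw [show (1:ℝ) = Real.exp 0 by simp]
      exact Real.exp_le_exp.2 (by positivity)
    have h2 : (0:ℝ) ≤ Γ / (2 * α) := by positivity
    have h3 : (0:ℝ) < Real.exp (-α * (t + s)) := Real.exp_pos _
    have h4 : (0:ℝ) ≤ Real.exp (2 * α * min t s) - 1 := by linarith
    exact mul_nonneg (mul_nonneg h2 h3.le) h4
  have hsum : Summable a := by
    refine summable_of_sum_range_le (c := K) hanonneg fun N => ?_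
    cases N with
    | zero => simpa using hKnn
    | succ M =>
      rw [hstep M]
      have h1 := RR_nonneg α hα M t s
      have h2 : (0:ℝ) ≤ Γ / α := by positivity
      nlinarith
  have hts : ∑' n, a n = K := tendsto_nhds_unique hsum.hasSum.tendsto_sum_nat hT'
  exact hts ▸ hsum.hasSum
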